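/- Let f be the exponential generating function of the Catalan numbers. Then f(t)·8·√(π t^3)·e^{−4t} tends to 1 as t → +∞; that is, f(t) is asymptotic to e^{4t}/(8√(π t^3)) as t → +∞. -/

import Mathlib

open scoped Nat

/-- The exponential generating function of the Catalan numbers. -/
noncomputable def catalanEGF (t : ℝ) : ℝ := ∑' n : ℕ, (catalan n : ℝ) * t ^ n / n !

namespace CatalanEGFAsymp

open Real MeasureTheory Set Filter intervalIntegral

noncomputable def w (x : ℝ) : ℝ := Real.sqrt (4 - x) / Real.sqrt x
noncomputable def h (u : ℝ) : ℝ := Real.sqrt u / Real.sqrt (4 - u)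

noncomputable def G (t : ℝ) : ℝ → ℝ :=
  (Set.Ioc (0:ℝ) (2*t)).indicator (fun s => Real.exp (-s) * Real.sqrt s / Real.sqrt (4 - s/t))




lemma w_meas : Measurable w := by
  unfold w
  exact (Real.continuous_sqrt.comp (continuous_const.sub continuous_id)).measurable.div
    Real.continuous_sqrt.measurable

lemma h_meas : Measurable h := by
  unfold h
  exact Real.continuous_sqrt.measurable.div
    (Real.continuous_sqrt.comp (continuous_const.sub continuous_id)).measurable

lemma w_nonneg (x : ℝ) : 0 ≤ w x := div_nonneg (Real.sqrt_nonneg _) (Real.sqrt_nonneg _)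
lemma h_nonneg (x : ℝ) : 0 ≤ h x := div_nonneg (Real.sqrt_nonneg _) (Real.sqrt_nonneg _)

lemma w_int : IntervalIntegrable w volume 0 4 := by
  have hg : IntervalIntegrable (fun x : ℝ => 2 * x ^ (-1/2 : ℝ)) volume 0 4 :=
    (intervalIntegrable_rpow' (by norm_num)).const_mul 2
  refine hg.mono_fun (w_meas.aestronglyMeasurable) ?_
  rw [uIoc_of_le (by norm_num : (0:ℝ) ≤ 4)]
  filter_upwards [ae_restrict_mem measurableSet_Ioc] with x hx
  have hx0 : 0 < x := hx.1
  have hx4 : x ≤ 4 := hx.2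
  have h1 : Real.sqrt (4 - x) ≤ 2 := by
    rw [show (2:ℝ) = Real.sqrt 4 by rw [show (4:ℝ) = 2^2 by norm_num, Real.sqrt_sq]; norm_num]
    exact Real.sqrt_le_sqrt (by linarith)
  have h2 : x ^ (-1/2 : ℝ) = (Real.sqrt x)⁻¹ := by
    rw [Real.sqrt_eq_rpow, ← Real.rpow_neg hx0.le]
    norm_num
  rw [Real.norm_of_nonneg (w_nonneg x), Real.norm_of_nonneg (by positivity), h2]
  unfold w
  rw [div_eq_mul_inv]
  exact mul_le_mul_of_nonneg_right h1 (by positivity)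

lemma h_int : IntervalIntegrable h volume 0 4 := by
  have hg0 : IntervalIntegrable (fun x : ℝ => 2 * x ^ (-1/2 : ℝ)) volume 0 4 :=
    (intervalIntegrable_rpow' (by norm_num)).const_mul 2
  have hg : IntervalIntegrable (fun x : ℝ => 2 * (4 - x) ^ (-1/2 : ℝ)) volume 0 4 := by
    have := (hg0.comp_sub_left 4).symm
    norm_num at this
    convert this using 2 with x
    norm_num
  refine hg.mono_fun (h_meas.aestronglyMeasurable) ?_
  rw [uIoc_of_le (by norm_num : (0:ℝ) ≤ 4)]
  filter_upwards [ae_restrict_mem measurableSet_Ioc] with x hx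
  have hx0 : 0 < x := hx.1
  have hx4 : x ≤ 4 := hx.2
  by_cases hx4' : x = 4
  · subst hx4'
    simp [h]
  have hlt : x < 4 := lt_of_le_of_ne hx4 hx4'
  have h1 : Real.sqrt x ≤ 2 := by
    rw [show (2:ℝ) = Real.sqrt 4 by rw [show (4:ℝ) = 2^2 by norm_num, Real.sqrt_sq]; norm_num]
    exact Real.sqrt_le_sqrt (by linarith)
  have h2 : (4 - x) ^ (-1/2 : ℝ) = (Real.sqrt (4 - x))⁻¹ := by
    rw [Real.sqrt_eq_rpow, ← Real.rpow_neg (by linarith : (0:ℝ) ≤ 4 - x)]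
    norm_num
  rw [Real.norm_of_nonneg (h_nonneg x),
    Real.norm_of_nonneg (mul_nonneg (by norm_num) (Real.rpow_nonneg (by linarith) _)), h2]
  unfold h
  rw [div_eq_mul_inv]
  exact mul_le_mul_of_nonneg_right h1 (by positivity)



lemma mom_base : ∫ x in (0:ℝ)..4, w x = 2 * π := by
  have hF : ∀ x ∈ Ioo (0:ℝ) 4,
      HasDerivAt (fun x : ℝ => Real.sqrt (4*x - x^2) + 2 * Real.arcsin (x/2 - 1)) (w x) x := by
    intro x hx
    obtain ⟨hx0, hx4⟩ := hx
    have ha : (0:ℝ) < Real.sqrt x := Real.sqrt_pos.2 hx0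
    have hb : (0:ℝ) < Real.sqrt (4 - x) := Real.sqrt_pos.2 (by linarith)
    have hg : HasDerivAt (fun x : ℝ => 4*x - x^2) (4 - 2*x) x := by
      refine (((hasDerivAt_id x).const_mul 4).sub (hasDerivAt_pow 2 x)).congr_deriv ?_
      norm_num
    have hgx : 4*x - x^2 ≠ 0 := by nlinarith
    have h1 : HasDerivAt (fun x : ℝ => Real.sqrt (4*x - x^2))
        ((4 - 2*x) / (2 * Real.sqrt (4*x - x^2))) x := hg.sqrt hgx
    have hinner : HasDerivAt (fun x : ℝ => x/2 - 1) (1/2) x := by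
      simpa using ((hasDerivAt_id x).div_const 2).sub_const 1
    have hne1 : x/2 - 1 ≠ -1 := by intro hc; nlinarith [hc]
    have hne2 : x/2 - 1 ≠ 1 := by intro hc; nlinarith [hc]
    have h2 : HasDerivAt (fun x : ℝ => Real.arcsin (x/2 - 1))
        (1 / Real.sqrt (1 - (x/2 - 1)^2) * (1/2)) x :=
      by have := (Real.hasDerivAt_arcsin hne1 hne2).comp x hinner; exact this
    have := h1.add ((h2.const_mul 2))
    refine this.congr_deriv ?_
    have hax : Real.sqrt x * Real.sqrt x = x := Real.mul_self_sqrt hx0.le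
    have hbx : Real.sqrt (4-x) * Real.sqrt (4-x) = 4 - x := Real.mul_self_sqrt (by linarith)
    have e1 : Real.sqrt (4*x - x^2) = Real.sqrt x * Real.sqrt (4 - x) := by
      rw [← Real.sqrt_mul hx0.le]; ring_nf
    have e2 : Real.sqrt (1 - (x/2 - 1)^2) = Real.sqrt x * Real.sqrt (4 - x) / 2 := by
      rw [show 1 - (x/2 - 1)^2 = (Real.sqrt x * Real.sqrt (4 - x) / 2)^2 by
        rw [div_pow, mul_pow, Real.sq_sqrt hx0.le,
          Real.sq_sqrt (show (0:ℝ) ≤ 4-x by linarith)]; ring]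
      exact Real.sqrt_sq (by positivity)
    rw [e1, e2]
    unfold w
    field_simp
    linear_combination (-2) * hbx
  have hcont : Continuous (fun x : ℝ => Real.sqrt (4*x - x^2) + 2 * Real.arcsin (x/2 - 1)) := by
    exact (Real.continuous_sqrt.comp (by continuity)).add
      (continuous_const.mul (Real.continuous_arcsin.comp (by continuity)))
  have := integral_eq_sub_of_hasDerivAt_of_tendsto (by norm_num : (0:ℝ) < 4) hF w_int
    ((hcont.continuousAt.tendsto).mono_left nhdsWithin_le_nhds)
    ((hcont.continuousAt.tendsto).mono_left nhdsWithin_le_nhds)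
  rw [this]
  norm_num [Real.arcsin_one, Real.arcsin_neg_one]
  ring

lemma In_int (n : ℕ) : IntervalIntegrable (fun x => x^n * w x) volume 0 4 :=
  w_int.continuousOn_mul (continuous_pow n).continuousOn

lemma mom_rec (n : ℕ) : ((n:ℝ)+2) * ∫ x in (0:ℝ)..4, x^(n+1) * w x
    = (4*n+2) * ∫ x in (0:ℝ)..4, x^n * w x := by
  set g : ℝ → ℝ := fun x => (4*(n:ℝ)+2) * (x^n * w x) - ((n:ℝ)+2) * (x^(n+1) * w x) with hg
  have hF : ∀ x ∈ Ioo (0:ℝ) 4,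
      HasDerivAt (fun x : ℝ => x^n * Real.sqrt x * ((4-x) * Real.sqrt (4-x))) (g x) x := by
    intro x hx
    obtain ⟨hx0, hx4⟩ := hx
    have ha : (0:ℝ) < Real.sqrt x := Real.sqrt_pos.2 hx0
    have hb : (0:ℝ) < Real.sqrt (4 - x) := Real.sqrt_pos.2 (by linarith)
    have hax : Real.sqrt x ^ 2 = x := Real.sq_sqrt hx0.le
    have hbx : Real.sqrt (4-x) ^ 2 = 4 - x := Real.sq_sqrt (by linarith)
    have h1 : HasDerivAt (fun x : ℝ => x^n) ((n:ℝ) * x^(n-1)) x := hasDerivAt_pow n x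
    have h2 : HasDerivAt Real.sqrt (1/(2*Real.sqrt x)) x := Real.hasDerivAt_sqrt hx0.ne'
    have h3 : HasDerivAt (fun x : ℝ => 4 - x) (-1) x := by
      simpa using (hasDerivAt_id x).const_sub 4
    have h4 : HasDerivAt (fun x : ℝ => Real.sqrt (4 - x)) ((-1)/(2*Real.sqrt (4-x))) x :=
      h3.sqrt (by nlinarith)
    have h6 := (h1.mul h2).mul (h3.mul h4)
    refine h6.congr_deriv ?_
    have hpow : (n:ℝ) * x^(n-1) * x = (n:ℝ) * x^n := by
      cases n with
      | zero => simp
      | succ m => push_cast; ring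
    have h12 : Real.sqrt x ^ 2 * Real.sqrt (4-x) ^ 2 = x * (4-x) := by rw [hax, hbx]
    rw [hg]
    unfold w
    simp only [Pi.mul_apply]
    field_simp
    linear_combination (-2*(n:ℝ)*x*x^(n-1)*Real.sqrt (4-x)^2 + 8*(n:ℝ)*x^(n-1)*Real.sqrt (4-x)^2
          + x*x^n - 4*x^n - 2*x^n*Real.sqrt (4-x)^2) * hax
      + (2*(n:ℝ)*x*x^n - 8*(n:ℝ)*x^n + x*x^n - 2*(n:ℝ)*x^2*x^(n-1) + 8*(n:ℝ)*x*x^(n-1)) * hbx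
      + (-16*x + 2*x^2 + 32) * hpow
  have hcont : Continuous (fun x : ℝ => x^n * Real.sqrt x * ((4-x) * Real.sqrt (4-x))) := by
    exact ((continuous_pow n).mul Real.continuous_sqrt).mul
      ((continuous_const.sub continuous_id).mul
        (Real.continuous_sqrt.comp (continuous_const.sub continuous_id)))
  have hgint : IntervalIntegrable g volume 0 4 :=
    ((In_int n).const_mul _).sub ((In_int (n+1)).const_mul _)
  have h0 := integral_eq_sub_of_hasDerivAt_of_tendsto (by norm_num : (0:ℝ) < 4) hF hgint
    ((hcont.continuousAt.tendsto).mono_left nhdsWithin_le_nhds)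
    ((hcont.continuousAt.tendsto).mono_left nhdsWithin_le_nhds)
  have hsplit : ∫ x in (0:ℝ)..4, g x
      = (4*(n:ℝ)+2) * (∫ x in (0:ℝ)..4, x^n * w x)
        - ((n:ℝ)+2) * ∫ x in (0:ℝ)..4, x^(n+1) * w x := by
    rw [hg, intervalIntegral.integral_sub ((In_int n).const_mul _) ((In_int (n+1)).const_mul _),
      intervalIntegral.integral_const_mul, intervalIntegral.integral_const_mul]
  rw [h0] at hsplit
  simp at hsplit
  linarith [hsplit]

lemma catalan_rec (n : ℕ) : ((n:ℝ)+2) * catalan (n+1) = (4*n+2) * catalan n := by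
  have h1 := succ_mul_catalan_eq_centralBinom (n+1)
  have h2 := Nat.succ_mul_centralBinom_succ n
  have h3 := succ_mul_catalan_eq_centralBinom n
  have key : (n+1) * ((n+2) * catalan (n+1)) = (n+1) * ((4*n+2) * catalan n) := by
    calc (n+1) * ((n+2) * catalan (n+1)) = (n+1) * ((n+1+1) * catalan (n+1)) := by ring
    _ = (n+1) * Nat.centralBinom (n+1) := by rw [h1]
    _ = 2 * (2*n+1) * Nat.centralBinom n := h2
    _ = 2 * (2*n+1) * ((n+1) * catalan n) := by rw [h3]
    _ = (n+1) * ((4*n+2) * catalan n) := by ring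
  have key2 := Nat.eq_of_mul_eq_mul_left (Nat.succ_pos n) key
  exact_mod_cast key2

lemma mom (n : ℕ) : ∫ x in (0:ℝ)..4, x^n * w x = 2 * π * catalan n := by
  induction n with
  | zero => simpa using mom_base
  | succ m ih =>
    have h1 := mom_rec m
    rw [ih] at h1
    have h2 : ((m:ℝ)+2) ≠ 0 := by positivity
    apply mul_left_cancel₀ h2
    rw [h1]
    linear_combination (-(2*π)) * catalan_rec m

lemma summable_cat (t : ℝ) (ht : 0 ≤ t) : Summable (fun n : ℕ => (catalan n : ℝ) * t ^ n / n !) := by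
  apply Summable.of_nonneg_of_le (fun n => by positivity) (fun n => ?_)
    (Real.summable_pow_div_factorial (4*t))
  have hcatn : catalan n ≤ 4 ^ n := by
    have e1 : catalan n ≤ n.centralBinom := by
      calc catalan n ≤ (n+1) * catalan n := Nat.le_mul_of_pos_left _ (Nat.succ_pos n)
      _ = n.centralBinom := succ_mul_catalan_eq_centralBinom n
    refine e1.trans ?_
    have e2 : n.centralBinom ≤ ∑ m ∈ Finset.range (2*n + 1), (2*n).choose m :=
      Finset.single_le_sum (f := fun m => (2*n).choose m) (fun i _ => Nat.zero_le _)
        (Finset.mem_range.2 (by omega))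
    rw [Nat.sum_range_choose] at e2
    calc n.centralBinom ≤ 2 ^ (2*n) := e2
    _ = 4 ^ n := by rw [pow_mul]; norm_num
  have hcat : (catalan n : ℝ) ≤ 4 ^ n := by exact_mod_cast hcatn
  calc (catalan n : ℝ) * t ^ n / n ! ≤ 4 ^ n * t ^ n / n ! := by gcongr
  _ = (4*t)^n / n ! := by rw [mul_pow]

lemma exp_tsum (y : ℝ) : Real.exp y = ∑' n : ℕ, y ^ n / n ! := by
  rw [Real.exp_eq_exp_ℝ, NormedSpace.exp_eq_tsum_div]

lemma egf_int (t : ℝ) (ht : 0 ≤ t) :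
    ∫ x in (0:ℝ)..4, Real.exp (t*x) * w x = 2 * π * catalanEGF t := by
  set F : ℕ → ℝ → ℝ := fun n x => (t^n / n !) * (x^n * w x) with hF
  have hpt : ∀ x : ℝ, Real.exp (t*x) * w x = ∑' n, F n x := by
    intro x
    rw [exp_tsum (t*x), ← tsum_mul_right]
    exact tsum_congr fun n => by rw [hF]; simp only [mul_pow]; ring
  have hFint : ∀ n, Integrable (F n) (volume.restrict (Ioc (0:ℝ) 4)) := by
    intro n
    exact ((In_int n).1.const_mul _)
  have hInorm : ∀ n, (∫ x in Ioc (0:ℝ) 4, ‖F n x‖) = t^n / n ! * (2 * π * catalan n) := by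
    intro n
    have h1 : ∀ x ∈ Ioc (0:ℝ) 4, ‖F n x‖ = F n x := by
      intro x hx
      exact Real.norm_of_nonneg (by
        have : (0:ℝ) ≤ x ^ n * w x := mul_nonneg (pow_nonneg hx.1.le n) (w_nonneg x)
        positivity)
    rw [setIntegral_congr_fun measurableSet_Ioc h1, hF]
    simp only []
    rw [MeasureTheory.integral_const_mul]
    congr 1
    rw [← mom n, intervalIntegral.integral_of_le (by norm_num : (0:ℝ) ≤ 4)]
  have hsum : Summable fun n => ∫ x in Ioc (0:ℝ) 4, ‖F n x‖ := by
    simp_rw [hInorm]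
    have := (summable_cat t ht).mul_left (2*π)
    apply this.congr
    intro n; ring
  have key := MeasureTheory.integral_tsum_of_summable_integral_norm hFint hsum
  rw [intervalIntegral.integral_of_le (by norm_num : (0:ℝ) ≤ 4)]
  calc ∫ x in Ioc (0:ℝ) 4, Real.exp (t*x) * w x = ∫ x in Ioc (0:ℝ) 4, ∑' n, F n x := by
        exact setIntegral_congr_fun measurableSet_Ioc (fun x _ => hpt x)
  _ = ∑' n, ∫ x in Ioc (0:ℝ) 4, F n x := key.symm
  _ = ∑' n, t^n / n ! * (2 * π * catalan n) := by
        refine tsum_congr fun n => ?_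
        rw [hF]
        simp only []
        rw [MeasureTheory.integral_const_mul, ← mom n,
          intervalIntegral.integral_of_le (by norm_num : (0:ℝ) ≤ 4)]
  _ = 2 * π * catalanEGF t := by
        unfold catalanEGF
        rw [← tsum_mul_left]
        exact tsum_congr fun n => by ring

lemma refl_int (t : ℝ) : ∫ x in (0:ℝ)..4, Real.exp (t*x) * w x
    = Real.exp (4*t) * ∫ u in (0:ℝ)..4, Real.exp (-(t*u)) * h u := by
  have key := intervalIntegral.integral_comp_sub_left (a := (0:ℝ)) (b := 4)
    (fun x => Real.exp (t*x) * w x) 4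
  rw [show (4:ℝ)-4 = 0 by norm_num, show (4:ℝ)-0 = 4 by norm_num] at key
  rw [← key, ← intervalIntegral.integral_const_mul]
  apply intervalIntegral.integral_congr
  intro u _
  show Real.exp (t*(4-u)) * w (4-u) = Real.exp (4*t) * (Real.exp (-(t*u)) * h u)
  unfold w h
  rw [show (4:ℝ) - (4 - u) = u by ring, ← mul_assoc, ← Real.exp_add,
    show 4*t + -(t*u) = t*(4-u) by ring]

lemma h_int' (a b : ℝ) (ha : 0 ≤ a) (hab : a ≤ b) (hb : b ≤ 4) :
    IntervalIntegrable h volume a b := by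
  apply h_int.mono_set
  rw [uIcc_of_le (by norm_num : (0:ℝ) ≤ 4)]
  exact uIcc_subset_Icc ⟨ha, le_trans hab hb⟩ ⟨le_trans ha hab, hb⟩

lemma eh_int (t : ℝ) (a b : ℝ) (ha : 0 ≤ a) (hab : a ≤ b) (hb : b ≤ 4) :
    IntervalIntegrable (fun u => Real.exp (-(t*u)) * h u) volume a b :=
  (h_int' a b ha hab hb).continuousOn_mul
    (Real.continuous_exp.comp (by continuity)).continuousOn

lemma tail_tendsto :
    Tendsto (fun t : ℝ => (t * Real.sqrt t) * ∫ u in (2:ℝ)..4, Real.exp (-(t*u)) * h u)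
      atTop (nhds 0) := by
  set C : ℝ := ∫ u in (2:ℝ)..4, h u with hC
  have hM : ∀ t : ℝ, 0 ≤ t → (∫ u in (2:ℝ)..4, Real.exp (-(t*u)) * h u)
      ≤ Real.exp (-(2*t)) * C := by
    intro t ht
    rw [hC, ← intervalIntegral.integral_const_mul]
    apply intervalIntegral.integral_mono_on (by norm_num)
      (eh_int t 2 4 (by norm_num) (by norm_num) le_rfl)
      ((h_int' 2 4 (by norm_num) (by norm_num) le_rfl).continuousOn_mul continuousOn_const)
    intro u hu
    have : Real.exp (-(t*u)) ≤ Real.exp (-(2*t)) :=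
      Real.exp_le_exp.2 (by nlinarith [hu.1, hu.2])
    exact mul_le_mul_of_nonneg_right this (h_nonneg u)
  have hup : Tendsto (fun t : ℝ => (t * Real.sqrt t) * (Real.exp (-(2*t)) * C))
      atTop (nhds 0) := by
    have base := (tendsto_rpow_mul_exp_neg_mul_atTop_nhds_zero (3/2) 2 (by norm_num)).mul_const C
    rw [zero_mul] at base
    apply base.congr'
    filter_upwards [eventually_gt_atTop (0:ℝ)] with t ht
    have : t ^ ((3:ℝ)/2) = t * Real.sqrt t := by
      rw [show (3:ℝ)/2 = 1 + 1/2 by norm_num, Real.rpow_add ht, Real.rpow_one,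
        ← Real.sqrt_eq_rpow]
    rw [this]; ring
  apply tendsto_of_tendsto_of_tendsto_of_le_of_le' tendsto_const_nhds hup
  · filter_upwards [eventually_ge_atTop (0:ℝ)] with t ht
    have : 0 ≤ ∫ u in (2:ℝ)..4, Real.exp (-(t*u)) * h u :=
      intervalIntegral.integral_nonneg (by norm_num)
        (fun u _ => mul_nonneg (Real.exp_pos _).le (h_nonneg u))
    positivity
  · filter_upwards [eventually_ge_atTop (0:ℝ)] with t ht
    exact mul_le_mul_of_nonneg_left (hM t ht) (by positivity)

lemma change_var (t : ℝ) (ht : 0 < t) :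
    (t * Real.sqrt t) * ∫ u in (0:ℝ)..2, Real.exp (-(t*u)) * h u = ∫ s, G t s := by
  have hc := intervalIntegral.integral_comp_div (a := (0:ℝ)) (b := 2*t)
    (f := fun u => Real.exp (-(t*u)) * h u) (ne_of_gt ht)
  rw [show (0:ℝ)/t = 0 by simp, show 2*t/t = 2 by field_simp] at hc
  have step1 : (t * Real.sqrt t) * ∫ u in (0:ℝ)..2, Real.exp (-(t*u)) * h u
      = ∫ s in (0:ℝ)..(2*t), Real.sqrt t * (Real.exp (-(t*(s/t))) * h (s/t)) := by
    rw [intervalIntegral.integral_const_mul]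
    rw [smul_eq_mul] at hc
    rw [hc]
    ring
  rw [step1]
  have step2 : ∫ s in (0:ℝ)..(2*t), Real.sqrt t * (Real.exp (-(t*(s/t))) * h (s/t))
      = ∫ s in (0:ℝ)..(2*t), Real.exp (-s) * Real.sqrt s / Real.sqrt (4 - s/t) := by
    apply intervalIntegral.integral_congr
    intro s hs
    rw [uIcc_of_le (by positivity : (0:ℝ) ≤ 2*t)] at hs
    have hs0 : 0 ≤ s := hs.1
    unfold h
    beta_reduce
    rw [show t*(s/t) = s by field_simp, Real.sqrt_div hs0]
    have hst : Real.sqrt t ≠ 0 := by positivity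
    field_simp
  rw [step2, intervalIntegral.integral_of_le (by positivity : (0:ℝ) ≤ 2*t)]
  unfold G
  rw [MeasureTheory.integral_indicator measurableSet_Ioc]

lemma G_bound_int : Integrable (fun s : ℝ => Real.exp (-s) * Real.sqrt s / Real.sqrt 2) volume := by
  have h1 : IntegrableOn (fun s : ℝ => Real.exp (-s) * Real.sqrt s / Real.sqrt 2) (Ioi 0) := by
    have base : IntegrableOn (fun x : ℝ => Real.exp (-x) * x ^ ((3:ℝ)/2 - 1) / Real.sqrt 2)
        (Ioi 0) volume := (Real.GammaIntegral_convergent (by norm_num : (0:ℝ) < 3/2)).div_const _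
    apply base.congr_fun ?_ measurableSet_Ioi
    intro s hs
    beta_reduce
    rw [show (3:ℝ)/2 - 1 = 1/2 by norm_num, ← Real.sqrt_eq_rpow]
  have h2 : IntegrableOn (fun s : ℝ => Real.exp (-s) * Real.sqrt s / Real.sqrt 2) (Iic 0) := by
    apply (integrableOn_zero (ε' := ℝ)).congr_fun ?_ measurableSet_Iic
    intro s hs
    simp only [Pi.zero_apply]
    rw [Real.sqrt_eq_zero'.mpr hs]
    simp
  have h3 := h2.union h1
  rw [Iic_union_Ioi] at h3
  exact integrableOn_univ.mp h3

lemma lim_value : ∫ s : ℝ, Real.exp (-s) * Real.sqrt s / 2 = Real.sqrt π / 4 := by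
  have h0 : ∀ s : ℝ, s ∉ Ioi (0:ℝ) → Real.exp (-s) * Real.sqrt s / 2 = 0 := by
    intro s hs
    rw [Real.sqrt_eq_zero'.mpr (by simpa using hs)]
    ring
  rw [← MeasureTheory.setIntegral_eq_integral_of_forall_compl_eq_zero h0]
  have h1 : ∫ s in Ioi (0:ℝ), Real.exp (-s) * Real.sqrt s / 2
      = (∫ s in Ioi (0:ℝ), Real.exp (-s) * s ^ ((3:ℝ)/2 - 1)) / 2 := by
    rw [← MeasureTheory.integral_div]
    apply setIntegral_congr_fun measurableSet_Ioi
    intro s _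
    beta_reduce
    rw [show (3:ℝ)/2 - 1 = 1/2 by norm_num, ← Real.sqrt_eq_rpow]
  rw [h1, ← Real.Gamma_eq_integral (by norm_num : (0:ℝ) < 3/2)]
  have h2 : Real.Gamma (3/2) = Real.sqrt π / 2 := by
    have := Real.Gamma_add_one (show (1:ℝ)/2 ≠ 0 by norm_num)
    rw [show (1:ℝ)/2 + 1 = 3/2 by norm_num, Real.Gamma_one_half_eq] at this
    rw [this]; ring
  rw [h2]; ring

lemma G_meas (t : ℝ) : AEStronglyMeasurable (G t) volume := by
  apply Measurable.aestronglyMeasurable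
  apply Measurable.indicator ?_ measurableSet_Ioc
  exact ((Real.continuous_exp.comp continuous_neg).measurable.mul
    Real.continuous_sqrt.measurable).div
    (Real.continuous_sqrt.measurable.comp ((measurable_const.sub
      (measurable_id.div_const t))))

lemma G_tendsto : Tendsto (fun t : ℝ => ∫ s, G t s) atTop
    (nhds (Real.sqrt π / 4)) := by
  rw [← lim_value]
  apply MeasureTheory.tendsto_integral_filter_of_dominated_convergence
    (bound := fun s : ℝ => Real.exp (-s) * Real.sqrt s / Real.sqrt 2)
  · exact Eventually.of_forall G_meas
  · filter_upwards [eventually_ge_atTop (1:ℝ)] with t ht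
    apply Eventually.of_forall
    intro s
    by_cases hs : s ∈ Ioc (0:ℝ) (2*t)
    · unfold G
      rw [indicator_of_mem hs]
      have ht0 : (0:ℝ) < t := lt_of_lt_of_le zero_lt_one ht
      have hst : s / t ≤ 2 := (div_le_iff₀ ht0).mpr (by linarith [hs.2])
      have h42 : (2:ℝ) ≤ 4 - s/t := by linarith
      have hs2 : Real.sqrt 2 ≤ Real.sqrt (4 - s/t) := Real.sqrt_le_sqrt h42
      rw [Real.norm_of_nonneg (by positivity)]
      apply div_le_div_of_nonneg_left (by positivity) (by positivity) hs2
    · unfold G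
      rw [indicator_of_notMem hs]
      simp only [norm_zero]
      positivity
  · exact G_bound_int
  · have hae : ∀ᵐ s : ℝ, s ≠ (0:ℝ) := by
      rw [MeasureTheory.ae_iff]
      simp only [ne_eq, not_not]
      rw [show {a : ℝ | a = 0} = ({0} : Set ℝ) by ext a; simp]
      exact measure_singleton 0
    filter_upwards [hae] with s hs
    rcases lt_or_gt_of_ne hs with hneg | hpos
    · have : ∀ t : ℝ, G t s = 0 := by
        intro t
        unfold G
        apply indicator_of_notMem
        intro hmem
        exact absurd hmem.1 (not_lt.mpr hneg.le)
      rw [Real.sqrt_eq_zero'.mpr hneg.le]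
      simp only [this, mul_zero, zero_div]
      exact tendsto_const_nhds
    · have l1 : Tendsto (fun t : ℝ => 4 - s/t) atTop (nhds 4) := by
        have := tendsto_inv_atTop_zero (𝕜 := ℝ)
        have l0 : Tendsto (fun t : ℝ => s/t) atTop (nhds 0) := by
          simpa [div_eq_mul_inv] using this.const_mul s
        simpa using tendsto_const_nhds.sub l0
      have l2 : Tendsto (fun t : ℝ => Real.sqrt (4 - s/t)) atTop (nhds 2) := by
        have := (Real.continuous_sqrt.continuousAt (x := (4:ℝ))).tendsto.comp l1
        rwa [show Real.sqrt 4 = 2 by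
          rw [show (4:ℝ) = 2^2 by norm_num, Real.sqrt_sq]; norm_num] at this
      have l3 : Tendsto (fun t : ℝ => Real.exp (-s) * Real.sqrt s / Real.sqrt (4 - s/t))
          atTop (nhds (Real.exp (-s) * Real.sqrt s / 2)) :=
        tendsto_const_nhds.div l2 two_ne_zero
      apply l3.congr'
      filter_upwards [eventually_ge_atTop (s/2 ⊔ 1)] with t ht
      have ht1 : (1:ℝ) ≤ t := le_trans (le_sup_right) ht
      have hts : s/2 ≤ t := le_trans (le_sup_left) ht
      unfold G
      rw [indicator_of_mem (mem_Ioc.mpr ⟨hpos, by linarith⟩)]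

lemma head_tendsto :
    Tendsto (fun t : ℝ => (t * Real.sqrt t) * ∫ u in (0:ℝ)..2, Real.exp (-(t*u)) * h u)
      atTop (nhds (Real.sqrt π / 4)) := by
  apply G_tendsto.congr'
  filter_upwards [eventually_gt_atTop (0:ℝ)] with t ht
  exact (change_var t ht).symm

lemma full_tendsto :
    Tendsto (fun t : ℝ => (t * Real.sqrt t) * ∫ u in (0:ℝ)..4, Real.exp (-(t*u)) * h u)
      atTop (nhds (Real.sqrt π / 4)) := by
  have hsum := head_tendsto.add tail_tendsto
  rw [add_zero] at hsum
  apply hsum.congr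
  intro t
  rw [← mul_add]
  congr 1
  exact intervalIntegral.integral_add_adjacent_intervals
    (eh_int t 0 2 le_rfl (by norm_num) (by norm_num))
    (eh_int t 2 4 (by norm_num) (by norm_num) le_rfl)

end CatalanEGFAsymp

/-- For the exponential generating function f of the Catalan numbers,
f(t)·8·√(π t³)·e^{−4t} tends to 1 as t → +∞; i.e. f(t) ∼ e^{4t}/(8√(π t³)). -/
theorem catalan_egf_asymptotic_atTop :
    Filter.Tendsto
      (fun t : ℝ => catalanEGF t * 8 * Real.sqrt (Real.pi * t ^ 3) * Real.exp (-(4 * t)))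
      Filter.atTop (nhds 1) := by
  open Real MeasureTheory Set Filter CatalanEGFAsymp in
  have hπ : (0:ℝ) < π := Real.pi_pos
  have hsπ : Real.sqrt π ≠ 0 := by positivity
  have main0 := full_tendsto.const_mul (4 / Real.sqrt π)
  rw [show (4 / Real.sqrt π) * (Real.sqrt π / 4) = 1 by field_simp] at main0
  apply main0.congr'
  filter_upwards [Filter.eventually_gt_atTop (0:ℝ)] with t ht
  have hegf : catalanEGF t
      = Real.exp (4*t) * (∫ u in (0:ℝ)..4, Real.exp (-(t*u)) * h u) / (2*π) := by
    have h1 := egf_int t ht.le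
    rw [refl_int t] at h1
    field_simp
    linarith [h1]
  have hsq : Real.sqrt (π * t^3) = Real.sqrt π * (t * Real.sqrt t) := by
    rw [Real.sqrt_mul hπ.le, show t^3 = t^2 * t by ring, Real.sqrt_mul (sq_nonneg t),
      Real.sqrt_sq ht.le]
  have hexp : Real.exp (4*t) * Real.exp (-(4*t)) = 1 := by
    rw [← Real.exp_add]; simp
  have hππ : Real.sqrt π * Real.sqrt π = π := Real.mul_self_sqrt hπ.le
  rw [hegf, hsq]
  set K := ∫ u in (0:ℝ)..4, Real.exp (-(t*u)) * h u
  field_simp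
  linear_combination (-(8*K)) * hππ
    + (-(8*K*Real.sqrt π*Real.sqrt π)) * hexp
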